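/- Strict contraction of the implicit Euler step: if Δt > 0 and ũ, u ∈ L²(Ω × S²) satisfy ũ + Δt K_σ ũ = u, then (1 + Δt σ̲_a) ‖ũ‖ ≤ ‖u‖, where ‖·‖ denotes the L² norm on Ω × S². -/

import Mathlib

open MeasureTheory Metric Real
open scoped ENNReal RealInnerProductSpace

noncomputable section

/-- The ambient Euclidean space `ℝ³`. -/
abbrev E3 := EuclideanSpace ℝ (Fin 3)

/-- The unit sphere `S² ⊆ ℝ³`. -/
abbrev S2 := Metric.sphere (0 : E3) 1

/-- The surface measure on the unit sphere `S²`. -/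
def sphereMeasure : Measure S2 := (volume : Measure E3).toSphere

instance : IsFiniteMeasure sphereMeasure := by unfold sphereMeasure; infer_instance

open scoped NNReal in
lemma e_two_mul_le_add_sq (a b : ℝ≥0∞) : 2 * (a * b) ≤ a ^ 2 + b ^ 2 := by
  rcases eq_or_ne a ∞ with ha | ha
  · rcases eq_or_ne b 0 with hb | hb
    · simp [hb]
    · have : a ^ 2 = ∞ := by simp [ha]
      simp [this]
  · rcases eq_or_ne b ∞ with hb | hb
    · rcases eq_or_ne a 0 with ha0 | ha0
      · simp [ha0]
      · have : b ^ 2 = ∞ := by simp [hb]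
        simp [this]
    · lift a to ℝ≥0 using ha
      lift b to ℝ≥0 using hb
      rw [← ENNReal.coe_mul, ← ENNReal.coe_ofNat, ← ENNReal.coe_mul]
      rw [show ((a:ℝ≥0∞)^2 + b^2) = ((a^2 + b^2 : ℝ≥0) : ℝ≥0∞) by push_cast; ring]
      exact_mod_cast (by nlinarith [sq_nonneg ((a:ℝ) - b)] : (2 : ℝ) * (a * b) ≤ ((a:ℝ)^2 + b^2))

/-- The scattering operator `(Kv)(x,s) = ∫_{S²} Φ(s,s') v(x,s') dσ(s')`. -/
def scatK (Φ : S2 → S2 → ℝ) (v : E3 × S2 → ℝ) : E3 × S2 → ℝ :=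
  fun p => ∫ s', Φ p.2 s' * v (p.1, s') ∂sphereMeasure

/-- The product measure on `Ω × S²` (Lebesgue measure restricted to `Ω` times the
surface measure on `S²`). -/
def rteMeasure (Ω : Set E3) : Measure (E3 × S2) :=
  ((volume : Measure E3).restrict Ω).prod sphereMeasure

/-- The removal operator `(K_σ v)(x,s) = σ_a(x) v(x,s) + σ_s(x) (v(x,s) - (Kv)(x,s))`. -/
def removalK (Φ : S2 → S2 → ℝ) (σa σs : E3 → ℝ) (v : E3 × S2 → ℝ) : E3 × S2 → ℝ :=
  fun p => σa p.1 * v p + σs p.1 * (v p - scatK Φ v p)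

set_option maxHeartbeats 1000000 in
/-- strict contraction of the implicit Euler step: if
`ũ + Δt K_σ ũ = u` then `(1 + Δt σ̲_a) ‖ũ‖ ≤ ‖u‖`. -/
theorem implicitEuler_contraction
    (Ω : Set E3) (hΩo : IsOpen Ω) (hΩb : Bornology.IsBounded Ω)
    (Φ : S2 → S2 → ℝ)
    (hΦmeas : Measurable (Function.uncurry Φ))
    (hΦpos : ∀ s s', 0 ≤ Φ s s')
    (hΦsymm : ∀ s s', Φ s s' = Φ s' s)
    (hΦnorm : ∀ s, (∫ s', Φ s s' ∂sphereMeasure) = 1)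
    (σa σs : E3 → ℝ) (hσa_meas : Measurable σa) (hσs_meas : Measurable σs)
    (σa_lo σa_hi σs_hi : ℝ)
    (hσa_lo_pos : 0 < σa_lo) (hσa_hi_pos : 0 < σa_hi) (hσs_hi_pos : 0 < σs_hi)
    (hσs_bound : ∀ᵐ x ∂(volume : Measure E3).restrict Ω, 0 ≤ σs x ∧ σs x ≤ σs_hi)
    (hσa_bound : ∀ᵐ x ∂(volume : Measure E3).restrict Ω, σa_lo ≤ σa x ∧ σa x ≤ σa_hi)
    (Δt : ℝ) (hΔt : 0 < Δt)
    (util u : E3 × S2 → ℝ)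
    (hutil : MemLp util 2 (rteMeasure Ω)) (hu : MemLp u 2 (rteMeasure Ω))
    (heq : ∀ᵐ p ∂(rteMeasure Ω), util p + Δt * removalK Φ σa σs util p = u p) :
    ENNReal.ofReal (1 + Δt * σa_lo) * eLpNorm util 2 (rteMeasure Ω) ≤
      eLpNorm u 2 (rteMeasure Ω) := by
  classical
  set ν := sphereMeasure with hν
  set lam := (volume : Measure E3).restrict Ω with hlam
  have hμ : rteMeasure Ω = lam.prod ν := rfl
  -- lifting a.e. statements from Ω to Ω × S²
  have lift_ae : ∀ {P : E3 → Prop}, (∀ᵐ x ∂lam, P x) → ∀ᵐ p ∂(rteMeasure Ω), P p.1 := by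
    intro P hP
    rw [hμ]
    exact Measure.quasiMeasurePreserving_fst.ae hP
  -- measurable representative of util
  obtain ⟨g, hg_sm, hg_ae⟩ : ∃ g, StronglyMeasurable g ∧ util =ᵐ[rteMeasure Ω] g :=
    ⟨hutil.1.mk util, hutil.1.stronglyMeasurable_mk, hutil.1.ae_eq_mk⟩
  have hgm : Measurable g := hg_sm.measurable
  have hsect : ∀ᵐ x ∂lam, ∀ᵐ s ∂ν, util (x, s) = g (x, s) := by
    have h := hg_ae; rw [hμ] at h
    exact Measure.ae_ae_of_ae_prod h
  have hscat : ∀ᵐ x ∂lam, ∀ s, scatK Φ util (x, s) = scatK Φ g (x, s) := by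
    filter_upwards [hsect] with x hx s
    refine integral_congr_ae ?_
    filter_upwards [hx] with s' hs'
    rw [hs']
  set w : E3 × S2 → ℝ := fun p => |g p| with hwdef
  have hwm : Measurable w := hgm.abs
  have hw_nn : ∀ p, 0 ≤ w p := fun p => abs_nonneg _
  have hscatw_nn : ∀ p, 0 ≤ scatK Φ w p := fun p =>
    integral_nonneg fun s' => mul_nonneg (hΦpos _ _) (hw_nn _)
  have habs : ∀ x s, |scatK Φ g (x, s)| ≤ scatK Φ w (x, s) := by
    intro x s
    calc |∫ s', Φ s s' * g (x, s') ∂ν| ≤ ∫ s', |Φ s s'| * |g (x, s')| ∂ν := by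
          simpa [Real.norm_eq_abs, abs_mul] using
            norm_integral_le_integral_norm (μ := ν) (fun s' => Φ s s' * g (x, s'))
      _ = ∫ s', Φ s s' * w (x, s') ∂ν := by
          refine integral_congr_ae (Filter.Eventually.of_forall fun s' => ?_)
          show |Φ s s'| * |g (x, s')| = Φ s s' * w (x, s')
          rw [abs_of_nonneg (hΦpos s s')]
  -- Lp elements and integrability
  haveI : Fact ((1:ℝ≥0∞) ≤ 2) := ⟨one_le_two⟩
  set F := hutil.toLp util with hF
  set G := hu.toLp u with hG
  have hmul : Integrable (fun p => u p * util p) (rteMeasure Ω) := by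
    refine (L2.integrable_inner (𝕜 := ℝ) G F).congr ?_
    filter_upwards [hu.coeFn_toLp, hutil.coeFn_toLp] with p h1 h2
    simp [hF, hG, h1, h2, RCLike.inner_apply, mul_comm]
  have hsq : Integrable (fun p => util p * util p) (rteMeasure Ω) := by
    refine (L2.integrable_inner (𝕜 := ℝ) F F).congr ?_
    filter_upwards [hutil.coeFn_toLp] with p h2
    simp [hF, h2, RCLike.inner_apply, sq]
  have hbd_a : ∀ᵐ p ∂(rteMeasure Ω), ‖σa p.1‖ ≤ σa_hi := by
    refine lift_ae (P := fun x => ‖σa x‖ ≤ σa_hi) ?_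
    filter_upwards [hσa_bound] with x hx
    rw [Real.norm_eq_abs, abs_of_nonneg (le_trans hσa_lo_pos.le hx.1)]
    exact hx.2
  have hbd_s : ∀ᵐ p ∂(rteMeasure Ω), ‖σs p.1‖ ≤ σs_hi := by
    refine lift_ae (P := fun x => ‖σs x‖ ≤ σs_hi) ?_
    filter_upwards [hσs_bound] with x hx
    rw [Real.norm_eq_abs, abs_of_nonneg hx.1]
    exact hx.2
  have ht1 : Integrable (fun p => σa p.1 * (util p * util p)) (rteMeasure Ω) :=
    hsq.bdd_mul ((hσa_meas.comp measurable_fst).aestronglyMeasurable) hbd_a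
  have ht2 : Integrable (fun p => σs p.1 * (util p * util p)) (rteMeasure Ω) :=
    hsq.bdd_mul ((hσs_meas.comp measurable_fst).aestronglyMeasurable) hbd_s
  have hrem : Integrable (fun p => removalK Φ σa σs util p * util p) (rteMeasure Ω) := by
    refine ((hmul.sub hsq).const_mul Δt⁻¹).congr ?_
    filter_upwards [heq] with p hp
    have h1 : removalK Φ σa σs util p = Δt⁻¹ * (u p - util p) := by
      field_simp
      linarith
    simp only [Pi.sub_apply]
    rw [h1]
    ring
  have ht3 : Integrable (fun p => σs p.1 * (scatK Φ util p * util p)) (rteMeasure Ω) := by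
    refine ((ht1.add ht2).sub hrem).congr (Filter.Eventually.of_forall fun p => ?_)
    simp only [removalK, Pi.add_apply, Pi.sub_apply]
    ring
  -- ENNReal versions
  set W : E3 × S2 → ℝ≥0∞ := fun p => ENNReal.ofReal (w p) with hWdef
  have hWm : Measurable W := ENNReal.measurable_ofReal.comp hwm
  have hWne : ∀ p, W p ≠ ∞ := fun p => ENNReal.ofReal_ne_top
  set ΦE : S2 → S2 → ℝ≥0∞ := fun s s' => ENNReal.ofReal (Φ s s') with hΦEdef
  have hΦEm : Measurable (Function.uncurry ΦE) := ENNReal.measurable_ofReal.comp hΦmeas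
  have hΦsecm : ∀ s, Measurable (Φ s) := fun s =>
    hΦmeas.comp (measurable_const.prodMk measurable_id)
  have hΦint : ∀ s, Integrable (Φ s) ν := by
    intro s
    by_contra h
    have h2 := hΦnorm s
    rw [integral_undef h] at h2
    exact one_ne_zero h2.symm
  have hΦone : ∀ s, ∫⁻ s', ΦE s s' ∂ν = 1 := by
    intro s
    rw [show (fun s' => ΦE s s') = fun s' => ENNReal.ofReal (Φ s s') from rfl]
    rw [← ofReal_integral_eq_lintegral_ofReal (hΦint s)
      (Filter.Eventually.of_forall (hΦpos s)), hΦnorm s, ENNReal.ofReal_one]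
  have hΦone' : ∀ s', ∫⁻ s, ΦE s s' ∂ν = 1 := by
    intro s'
    refine Eq.trans (lintegral_congr fun s => ?_) (hΦone s')
    show ENNReal.ofReal (Φ s s') = ENNReal.ofReal (Φ s' s)
    rw [hΦsymm s s']
  have hscatW : ∀ x s, ENNReal.ofReal (scatK Φ w (x, s)) ≤ ∫⁻ s', ΦE s s' * W (x, s') ∂ν := by
    intro x s
    have hrw : scatK Φ w (x, s) = ∫ s', Φ s s' * w (x, s') ∂ν := rfl
    by_cases hint : Integrable (fun s' => Φ s s' * w (x, s')) ν
    · rw [hrw, ofReal_integral_eq_lintegral_ofReal hint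
        (Filter.Eventually.of_forall fun s' => mul_nonneg (hΦpos s s') (hw_nn _))]
      refine le_of_eq (lintegral_congr fun s' => ?_)
      rw [ENNReal.ofReal_mul (hΦpos s s')]
    · rw [hrw, integral_undef hint]
      simp
  have ht3'le : ∀ p : E3 × S2, ENNReal.ofReal (σs p.1 * (scatK Φ w p * w p)) ≤
      ENNReal.ofReal (σs p.1) * ((∫⁻ s', ΦE p.2 s' * W (p.1, s') ∂ν) * W p) := by
    intro p
    rw [ENNReal.ofReal_mul' (mul_nonneg (hscatw_nn p) (hw_nn p)),
      ENNReal.ofReal_mul (hscatw_nn p)]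
    exact mul_le_mul_right (mul_le_mul_left (hscatW p.1 p.2) _) _
  have hmeasInner : Measurable fun p : E3 × S2 => ∫⁻ s', ΦE p.2 s' * W (p.1, s') ∂ν := by
    apply Measurable.lintegral_prod_right'
      (f := fun (q : (E3 × S2) × S2) => ΦE q.1.2 q.2 * W (q.1.1, q.2))
    exact (hΦEm.comp ((measurable_fst.snd).prodMk measurable_snd)).mul
      (hWm.comp ((measurable_fst.fst).prodMk measurable_snd))
  have hσsE : Measurable fun p : E3 × S2 => ENNReal.ofReal (σs p.1) :=
    ENNReal.measurable_ofReal.comp (hσs_meas.comp measurable_fst)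
  have hcore : (∫⁻ p, ENNReal.ofReal (σs p.1) *
        ((∫⁻ s', ΦE p.2 s' * W (p.1, s') ∂ν) * W p) ∂(rteMeasure Ω)) ≤
      ∫⁻ p, ENNReal.ofReal (σs p.1) * W p ^ 2 ∂(rteMeasure Ω) := by
    rw [hμ]
    rw [MeasureTheory.lintegral_prod (fun p => ENNReal.ofReal (σs p.1) *
          ((∫⁻ s', ΦE p.2 s' * W (p.1, s') ∂ν) * W p)) ((hσsE.mul (hmeasInner.mul hWm)).aemeasurable),
        MeasureTheory.lintegral_prod (fun p => ENNReal.ofReal (σs p.1) * W p ^ 2)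
          ((hσsE.mul (hWm.pow_const 2)).aemeasurable)]
    refine lintegral_mono fun x => ?_
    simp only
    rw [lintegral_const_mul' _ _ ENNReal.ofReal_ne_top,
        lintegral_const_mul' _ _ ENNReal.ofReal_ne_top]
    refine mul_le_mul_right ?_ _
    set Wx : S2 → ℝ≥0∞ := fun s => W (x, s) with hWx
    have hWxm : Measurable Wx := hWm.comp (measurable_const.prodMk measurable_id)
    have hWxne : ∀ s, Wx s ≠ ∞ := fun s => hWne _
    have h2ne : (2 : ℝ≥0∞) ≠ ∞ := ENNReal.ofNat_ne_top
    have hΦxm : ∀ s : S2, Measurable fun s' => ΦE s s' :=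
      fun s => (hΦEm.comp (measurable_const.prodMk measurable_id))
    have hprodm : Measurable fun q : S2 × S2 => ΦE q.1 q.2 * Wx q.2 ^ 2 :=
      (hΦEm.comp ((measurable_fst).prodMk measurable_snd)).mul
        ((hWxm.comp measurable_snd).pow_const 2)
    have hT1 : (∫⁻ s, ∫⁻ s', ΦE s s' * Wx s' ^ 2 ∂ν ∂ν) = ∫⁻ s, Wx s ^ 2 ∂ν := by
      rw [lintegral_lintegral_swap hprodm.aemeasurable]
      refine lintegral_congr fun s' => ?_
      rw [lintegral_mul_const' _ _ (ENNReal.pow_ne_top (hWxne s')), hΦone' s', one_mul]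
    have hT2 : (∫⁻ s, ∫⁻ s', ΦE s s' * Wx s ^ 2 ∂ν ∂ν) = ∫⁻ s, Wx s ^ 2 ∂ν := by
      refine lintegral_congr fun s => ?_
      rw [lintegral_mul_const' _ _ (ENNReal.pow_ne_top (hWxne s)), hΦone s, one_mul]
    have main : 2 * ∫⁻ s, (∫⁻ s', ΦE s s' * Wx s' ∂ν) * Wx s ∂ν ≤ 2 * ∫⁻ s, Wx s ^ 2 ∂ν := by
      calc 2 * ∫⁻ s, (∫⁻ s', ΦE s s' * Wx s' ∂ν) * Wx s ∂ν
          = ∫⁻ s, 2 * ((∫⁻ s', ΦE s s' * Wx s' ∂ν) * Wx s) ∂ν :=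
            (lintegral_const_mul' 2 _ h2ne).symm
        _ = ∫⁻ s, ∫⁻ s', 2 * (ΦE s s' * Wx s' * Wx s) ∂ν ∂ν := by
            refine lintegral_congr fun s => ?_
            rw [← lintegral_mul_const' (Wx s) _ (hWxne s), ← lintegral_const_mul' 2 _ h2ne]
        _ ≤ ∫⁻ s, ∫⁻ s', (ΦE s s' * Wx s' ^ 2 + ΦE s s' * Wx s ^ 2) ∂ν ∂ν := by
            refine lintegral_mono fun s => lintegral_mono fun s' => ?_
            calc 2 * (ΦE s s' * Wx s' * Wx s) = ΦE s s' * (2 * (Wx s' * Wx s)) := by ring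
              _ ≤ ΦE s s' * (Wx s' ^ 2 + Wx s ^ 2) :=
                  mul_le_mul_right (e_two_mul_le_add_sq _ _) _
              _ = ΦE s s' * Wx s' ^ 2 + ΦE s s' * Wx s ^ 2 := by ring
        _ = (∫⁻ s, ∫⁻ s', ΦE s s' * Wx s' ^ 2 ∂ν ∂ν)
              + ∫⁻ s, ∫⁻ s', ΦE s s' * Wx s ^ 2 ∂ν ∂ν := by
            rw [← lintegral_add_left]
            · refine lintegral_congr fun s => ?_
              rw [← lintegral_add_left]
              exact (hΦxm s).mul ((hWxm).pow_const 2)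
            · exact Measurable.lintegral_prod_right'
                (f := fun q : S2 × S2 => ΦE q.1 q.2 * Wx q.2 ^ 2) hprodm
        _ = 2 * ∫⁻ s, Wx s ^ 2 ∂ν := by rw [hT1, hT2, two_mul]
    exact (ENNReal.mul_le_mul_iff_right two_ne_zero h2ne).mp main
  -- a.e. comparison of t3 with its absolute version
  have hσs_nn_p : ∀ᵐ p ∂(rteMeasure Ω), 0 ≤ σs p.1 :=
    lift_ae (P := fun x => 0 ≤ σs x) (by filter_upwards [hσs_bound] with x hx using hx.1)
  have hscat_p : ∀ᵐ p ∂(rteMeasure Ω), scatK Φ util p = scatK Φ g p := by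
    have h := lift_ae (P := fun x => ∀ s, scatK Φ util (x, s) = scatK Φ g (x, s)) hscat
    filter_upwards [h] with p hp
    exact hp p.2
  have haet3 : ∀ᵐ p ∂(rteMeasure Ω), σs p.1 * (scatK Φ util p * util p) ≤
      σs p.1 * (scatK Φ w p * w p) := by
    filter_upwards [hσs_nn_p, hscat_p, hg_ae] with p h0 h1 h2
    refine mul_le_mul_of_nonneg_left ?_ h0
    rw [h1, h2]
    calc scatK Φ g p * g p ≤ |scatK Φ g p * g p| := le_abs_self _
      _ = |scatK Φ g p| * |g p| := abs_mul _ _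
      _ ≤ scatK Φ w p * w p :=
          mul_le_mul_of_nonneg_right (habs p.1 p.2) (abs_nonneg _)
  -- the dissipation estimate
  have ht2nn : 0 ≤ᵐ[rteMeasure Ω] fun p => σs p.1 * (util p * util p) := by
    filter_upwards [hσs_nn_p] with p h0
    exact mul_nonneg h0 (mul_self_nonneg _)
  have hstep : (∫ p, σs p.1 * (scatK Φ util p * util p) ∂(rteMeasure Ω)) ≤
      ∫ p, σs p.1 * (util p * util p) ∂(rteMeasure Ω) := by
    have hI2 : (∫⁻ p, ENNReal.ofReal (σs p.1 * (util p * util p)) ∂(rteMeasure Ω))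
        = ENNReal.ofReal (∫ p, σs p.1 * (util p * util p) ∂(rteMeasure Ω)) :=
      (ofReal_integral_eq_lintegral_ofReal ht2 ht2nn).symm
    have hWeq : (∫⁻ p, ENNReal.ofReal (σs p.1) * W p ^ 2 ∂(rteMeasure Ω))
        = ∫⁻ p, ENNReal.ofReal (σs p.1 * (util p * util p)) ∂(rteMeasure Ω) := by
      refine lintegral_congr_ae ?_
      filter_upwards [hσs_nn_p, hg_ae] with p h0 h2
      rw [ENNReal.ofReal_mul h0, h2]
      congr 1
      rw [sq, hWdef]
      rw [← ENNReal.ofReal_mul (hw_nn p)]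
      congr 1
      exact (abs_mul_abs_self (g p))
    have hchain : (∫⁻ p, ENNReal.ofReal (σs p.1 * (scatK Φ util p * util p)) ∂(rteMeasure Ω))
        ≤ ENNReal.ofReal (∫ p, σs p.1 * (util p * util p) ∂(rteMeasure Ω)) := by
      rw [← hI2, ← hWeq]
      calc (∫⁻ p, ENNReal.ofReal (σs p.1 * (scatK Φ util p * util p)) ∂(rteMeasure Ω))
          ≤ ∫⁻ p, ENNReal.ofReal (σs p.1 * (scatK Φ w p * w p)) ∂(rteMeasure Ω) :=
            lintegral_mono_ae (haet3.mono fun p hp => ENNReal.ofReal_le_ofReal hp)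
        _ ≤ ∫⁻ p, ENNReal.ofReal (σs p.1) *
              ((∫⁻ s', ΦE p.2 s' * W (p.1, s') ∂ν) * W p) ∂(rteMeasure Ω) :=
            lintegral_mono ht3'le
        _ ≤ _ := hcore
    calc ∫ p, σs p.1 * (scatK Φ util p * util p) ∂(rteMeasure Ω)
        ≤ ∫ p, max (σs p.1 * (scatK Φ util p * util p)) 0 ∂(rteMeasure Ω) :=
          integral_mono_ae ht3 ht3.pos_part
            (Filter.Eventually.of_forall fun p => le_max_left _ _)
      _ = (∫⁻ p, ENNReal.ofReal (max (σs p.1 * (scatK Φ util p * util p)) 0)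
            ∂(rteMeasure Ω)).toReal :=
          integral_eq_lintegral_of_nonneg_ae
            (Filter.Eventually.of_forall fun p => le_max_right _ _)
            ht3.pos_part.aestronglyMeasurable
      _ = (∫⁻ p, ENNReal.ofReal (σs p.1 * (scatK Φ util p * util p))
            ∂(rteMeasure Ω)).toReal := by
          congr 1
          refine lintegral_congr fun p => ?_
          rcases le_total (σs p.1 * (scatK Φ util p * util p)) 0 with h | h
          · rw [max_eq_right h, ENNReal.ofReal_zero,
              eq_comm, ENNReal.ofReal_eq_zero]
            exact h
          · rw [max_eq_left h]
      _ ≤ (ENNReal.ofReal (∫ p, σs p.1 * (util p * util p) ∂(rteMeasure Ω))).toReal :=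
          ENNReal.toReal_mono ENNReal.ofReal_ne_top hchain
      _ = ∫ p, σs p.1 * (util p * util p) ∂(rteMeasure Ω) :=
          ENNReal.toReal_ofReal (integral_nonneg_of_ae ht2nn)
  -- coercivity of the removal operator
  have hKσ : σa_lo * ∫ p, util p * util p ∂(rteMeasure Ω) ≤
      ∫ p, removalK Φ σa σs util p * util p ∂(rteMeasure Ω) := by
    have hsplit : (∫ p, removalK Φ σa σs util p * util p ∂(rteMeasure Ω))
        = ((∫ p, σa p.1 * (util p * util p) ∂(rteMeasure Ω))
          + (∫ p, σs p.1 * (util p * util p) ∂(rteMeasure Ω)))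
          - ∫ p, σs p.1 * (scatK Φ util p * util p) ∂(rteMeasure Ω) := by
      have hadd : Integrable (fun p => σa p.1 * (util p * util p)
          + σs p.1 * (util p * util p)) (rteMeasure Ω) := ht1.add ht2
      rw [← integral_add ht1 ht2, ← integral_sub hadd ht3]
      refine integral_congr_ae (Filter.Eventually.of_forall fun p => ?_)
      simp only [removalK, Pi.add_apply, Pi.sub_apply]
      ring
    have h1 : σa_lo * ∫ p, util p * util p ∂(rteMeasure Ω)
        ≤ ∫ p, σa p.1 * (util p * util p) ∂(rteMeasure Ω) := by
      rw [← integral_const_mul]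
      refine integral_mono_ae (hsq.const_mul σa_lo) ht1 ?_
      refine (lift_ae (P := fun x => σa_lo ≤ σa x)
        (by filter_upwards [hσa_bound] with x hx using hx.1)).mono fun p hp => ?_
      exact mul_le_mul_of_nonneg_right hp (mul_self_nonneg _)
    linarith [hstep]
  -- the implicit Euler identity
  have hB : (∫ p, u p * util p ∂(rteMeasure Ω)) = (∫ p, util p * util p ∂(rteMeasure Ω))
      + Δt * ∫ p, removalK Φ σa σs util p * util p ∂(rteMeasure Ω) := by
    rw [← integral_const_mul, ← integral_add hsq (hrem.const_mul Δt)]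
    refine integral_congr_ae ?_
    filter_upwards [heq] with p hp
    rw [← hp]
    ring
  -- inner products
  have hA : ⟪F, F⟫ = ∫ p, util p * util p ∂(rteMeasure Ω) := by
    rw [L2.inner_def]
    refine integral_congr_ae ?_
    filter_upwards [hutil.coeFn_toLp] with p h2
    simp [hF, h2, RCLike.inner_apply, sq]
  have hBip : ⟪G, F⟫ = ∫ p, u p * util p ∂(rteMeasure Ω) := by
    rw [L2.inner_def]
    refine integral_congr_ae ?_
    filter_upwards [hu.coeFn_toLp, hutil.coeFn_toLp] with p h1 h2
    simp [hF, hG, h1, h2, RCLike.inner_apply, mul_comm]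
  have hnormF : ‖F‖ ^ 2 = ∫ p, util p * util p ∂(rteMeasure Ω) := by
    rw [← real_inner_self_eq_norm_sq, hA]
  have hfin : (1 + Δt * σa_lo) * ‖F‖ ^ 2 ≤ ‖G‖ * ‖F‖ := by
    have hcs := real_inner_le_norm G F
    rw [hBip] at hcs
    have h2 := mul_le_mul_of_nonneg_left hKσ hΔt.le
    rw [hnormF]
    nlinarith [hB]
  rcases eq_or_lt_of_le (norm_nonneg F) with h0 | h0
  · have hz : eLpNorm util 2 (rteMeasure Ω) = 0 := by
      have hn : ‖F‖ = (eLpNorm util 2 (rteMeasure Ω)).toReal := by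
        rw [hF]; exact Lp.norm_toLp util hutil
      have h3 : (eLpNorm util 2 (rteMeasure Ω)).toReal = 0 := by rw [← hn, ← h0]
      rcases (ENNReal.toReal_eq_zero_iff _).mp h3 with h4 | h4
      · exact h4
      · exact absurd h4 hutil.2.ne
    rw [hz, mul_zero]
    exact zero_le
  · have hle : (1 + Δt * σa_lo) * ‖F‖ ≤ ‖G‖ := by nlinarith [hfin, h0]
    have h1 : eLpNorm util 2 (rteMeasure Ω) = ENNReal.ofReal ‖F‖ := by
      rw [hF, Lp.norm_toLp util hutil, ENNReal.ofReal_toReal hutil.2.ne]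
    have h2 : eLpNorm u 2 (rteMeasure Ω) = ENNReal.ofReal ‖G‖ := by
      rw [hG, Lp.norm_toLp u hu, ENNReal.ofReal_toReal hu.2.ne]
    rw [h1, h2, ← ENNReal.ofReal_mul (by nlinarith [mul_pos hΔt hσa_lo_pos])]
    exact ENNReal.ofReal_le_ofReal hle
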